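/- Let G be a countable discrete group, H ≤ G a subgroup, and X = G/H. Let 0 < θ < 1 and let q = 2/(2−θ), i.e. 1/q = 1 − θ/2. Let w : G → (0,∞) be a strictly positive function and β₀, β₁ ∈ ℝ, and set β_θ = (1−θ)β₀ + θβ₁. Assume (E₀): M₀ := sup_{g∈G} w(g)^{−β₀} < ∞, and (E₁): there exists M₁ > 0 such that ‖λ_X(f)ξ‖₂ ≤ M₁·‖π_#(|f|·w^{β₁})‖₂·‖ξ‖₂ for every finitely supported f : G → ℂ and every ξ ∈ ℓ²(X). Then for every finitely supported f : G → ℂ and every ξ ∈ ℓ^q(X), ‖λ_X(f)ξ‖_q ≤ M₀^{1−θ}·M₁^{θ}·‖π_#(|f|·w^{β_θ})‖_q·‖ξ‖_q. -/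

import Mathlib

open scoped ENNReal
open Filter Topology

noncomputable section

namespace PaperRD

variable {G : Type*} [Group G]

/-- The fiber summation (push-forward) `π_# f` of a real-valued function on `G`
along the projection `G → G ⧸ H` onto the space of left cosets. -/
def fiberSum (H : Subgroup G) (f : G → ℝ) (x : G ⧸ H) : ℝ :=
  ∑' g : {g : G // (QuotientGroup.mk g : G ⧸ H) = x}, f (g : G)

/-- The `ℓ^q`-norm (valued in `ℝ≥0∞`) of a function on a type. -/
def lqNorm {X : Type*} {E : Type*} [Norm E] (q : ℝ) (ξ : X → E) : ℝ≥0∞ :=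
  (∑' x : X, ENNReal.ofReal ‖ξ x‖ ^ q) ^ (1 / q)

/-- The quasi-regular convolution operator `λ_X(f)` acting on functions on `G ⧸ H`:
`(λ_X(f)ξ)(x) = ∑_{g ∈ G} f(g) ξ(g⁻¹ x)`. -/
def lam (H : Subgroup G) (f : G → ℂ) (ξ : G ⧸ H → ℂ) (x : G ⧸ H) : ℂ :=
  ∑' g : G, f g * ξ ((g⁻¹ : G) • x)

/-- Operator norm (in `ℝ≥0∞`) of a map on functions, with respect to the `ℓ^q` norms:
the supremum of `‖Tξ‖_q` over the unit ball. -/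
def opNorm {X : Type*} (q : ℝ) (T : (X → ℂ) → (X → ℂ)) : ℝ≥0∞ :=
  ⨆ ξ : {ξ : X → ℂ // lqNorm q ξ ≤ 1}, lqNorm q (T (ξ : X → ℂ))

/-- The spectral radius `r_q(μ) = lim_n ‖T_q^n‖^{1/n}`; since the sequence of norms is
submultiplicative the limit exists and equals `inf_n ‖T_q^n‖^{1/n}`, which we take as
the definition. -/
def specRad (H : Subgroup G) (μ : G → ℝ) (q : ℝ) : ℝ :=
  (⨅ n : ℕ, opNorm q ((lam H (fun g => (μ g : ℂ)))^[n + 1]) ^ (1 / (n + 1 : ℝ))).toReal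

/-- `c(G,H;μ) = sup_{p ∈ [2,∞)} ( -p · log r_{p/(p-1)}(μ) )`. -/
def cval (H : Subgroup G) (μ : G → ℝ) : ℝ :=
  sSup {y : ℝ | ∃ p : ℝ, 2 ≤ p ∧ y = -p * Real.log (specRad H μ (p / (p - 1)))}

/-- Convolution of real functions on `G`. -/
def conv (f φ : G → ℝ) (g : G) : ℝ :=
  ∑' y : G, f y * φ (y⁻¹ * g)

open scoped Classical in
/-- Convolution powers `μ^{*n}` (with `μ^{*0} = δ_e`). -/
def convPow (μ : G → ℝ) : ℕ → G → ℝ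
  | 0 => fun g => if g = 1 then 1 else 0
  | n + 1 => conv μ (convPow μ n)

/-- `ν_n = π_#(μ^{*n}) = μ^{*n} * δ_{eH}`, the distribution at time `n` of the
`μ`-random walk on `G ⧸ H` started at the base coset. -/
def walkDist (H : Subgroup G) (μ : G → ℝ) (n : ℕ) : G ⧸ H → ℝ :=
  fiberSum H (convPow μ n)

/-- Shannon entropy `H(ν) = -∑ ν log ν` (with the convention `0 log 0 = 0`,
automatic since `Real.log 0 = 0`). -/
def shannon {X : Type*} (ν : X → ℝ) : ℝ :=
  -∑' x : X, ν x * Real.log (ν x)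

/-- Rényi entropy of order `α`: `H_α(ν) = (1/(1-α)) log ∑ ν(x)^α`. -/
def renyi {X : Type*} (α : ℝ) (ν : X → ℝ) : ℝ :=
  (1 / (1 - α)) * Real.log (∑' x : X, ν x ^ α)

/-- Word length with respect to a generating set `S`. -/
def wordLength (S : Set G) (g : G) : ℕ :=
  sInf {n : ℕ | ∃ l : List G, (∀ s ∈ l, s ∈ S) ∧ l.length = n ∧ l.prod = g}

/-- The mixed `(2,1)`-norm of a function on `G` relative to the pair `(G,H)`:
`‖f‖_{(2,1)} = ( ∑_{x ∈ G/H} ( ∑_{g ∈ x} |f(g)| )² )^{1/2}`. -/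
def norm21 (H : Subgroup G) (f : G → ℂ) : ℝ :=
  Real.sqrt (∑' x : G ⧸ H,
    (∑' g : {g : G // (QuotientGroup.mk g : G ⧸ H) = x}, ‖f (g : G)‖) ^ 2)

/-- Convolution of complex functions on `G`. -/
def convC (f φ : G → ℂ) (g : G) : ℂ :=
  ∑' y : G, f y * φ (y⁻¹ * g)

/-- The Haagerup-type norm `‖f‖_h` for the pair `(G,H)`:
the supremum of `‖f ∗ φ‖_{(2,1)}` over finitely supported nonnegative `φ` with
`‖φ‖_{(2,1)} ≤ 1`. -/
def hNorm (H : Subgroup G) (f : G → ℂ) : ℝ :=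
  sSup {r : ℝ | ∃ φ : G → ℝ, (Function.support φ).Finite ∧ (∀ y, 0 ≤ φ y) ∧
    norm21 H (fun g => (φ g : ℂ)) ≤ 1 ∧
    r = norm21 H (convC f (fun g => (φ g : ℂ)))}

/-- The pair `(G,H)` has pair rapid decay w.r.t. the length `ℓ`, with exponent `s`. -/
def HasPairRDWith (H : Subgroup G) (ℓ : G → ℕ) (s : ℝ) : Prop :=
  ∃ C : ℝ, 0 < C ∧ ∀ f : G → ℂ, (Function.support f).Finite →
    hNorm H f ≤ C * norm21 H (fun g => f g * (((1 + (ℓ g : ℝ)) ^ s : ℝ) : ℂ))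

/-- The pair `(G,H)` has pair rapid decay w.r.t. the length `ℓ`. -/
def HasPairRD (H : Subgroup G) (ℓ : G → ℕ) : Prop :=
  ∃ s : ℝ, 0 < s ∧ HasPairRDWith H ℓ s

/-- Radial majorant `W(t) = sup { w(g) : ℓ(g) ≤ t }` of a weight `w`. -/
def radialMaj (ℓ : G → ℕ) (w : G → ℝ) (t : ℕ) : ℝ :=
  sSup (w '' {g : G | ℓ g ≤ t})

/-- The pair `(G,H)` satisfies subexponential Lorentz control (`SLC_subexp`)
w.r.t. the length `ℓ`: there is a weight `w ≥ 1` with `‖f‖_h ≤ C ‖f·w‖_{(2,1)}`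
for all finitely supported `f`, whose radial majorant `W` satisfies
`log W(t) / t → 0`. -/
def SLCsubexp (H : Subgroup G) (ℓ : G → ℕ) : Prop :=
  ∃ C : ℝ, 0 < C ∧ ∃ w : G → ℝ, (∀ g, 1 ≤ w g) ∧
    (∀ f : G → ℂ, (Function.support f).Finite →
      hNorm H f ≤ C * norm21 H (fun g => f g * (w g : ℂ))) ∧
    Tendsto (fun t : ℕ => Real.log (radialMaj ℓ w t) / (t : ℝ)) atTop (𝓝 0)

end PaperRD


open MeasureTheory in
private lemma tsum_holder_aux {ι : Type*} (a b : ι → ℝ≥0∞) {s : ℝ} (hs0 : 0 < s) (hs1 : s < 1) :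
    ∑' i, a i ^ s * b i ^ (1 - s) ≤ (∑' i, a i) ^ s * (∑' i, b i) ^ (1 - s) := by
  letI : MeasurableSpace ι := ⊤
  haveI : MeasurableSingletonClass ι := ⟨fun _ => trivial⟩
  have hs1' : (0:ℝ) < 1 - s := by linarith
  have hconj : (1/s).HolderConjugate (1/(1-s)) :=
    Real.holderConjugate_one_div hs0 hs1' (by ring)
  have h := ENNReal.lintegral_mul_le_Lp_mul_Lq (Measure.count : Measure ι) hconj
    (f := fun i => a i ^ s) (g := fun i => b i ^ (1-s))
    (Measurable.aemeasurable (fun _ _ => trivial)) (Measurable.aemeasurable (fun _ _ => trivial))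
  simp only [Pi.mul_apply, lintegral_count, one_div_one_div] at h
  have e1 : ∀ i, (a i ^ s) ^ (1/s) = a i := fun i => by
    rw [← ENNReal.rpow_mul, mul_one_div, div_self (ne_of_gt hs0), ENNReal.rpow_one]
  have e2 : ∀ i, (b i ^ (1-s)) ^ (1/(1-s)) = b i := fun i => by
    rw [← ENNReal.rpow_mul, mul_one_div, div_self (ne_of_gt hs1'), ENNReal.rpow_one]
  simpa only [e1, e2] using h

/-- Weighted interpolation estimate for the quasi-regular
representation. Let `0 < θ < 1` and `1/q = 1 - θ/2`. Let `w : G → (0,∞)`,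
`β₀ β₁ ∈ ℝ`, `β_θ = (1-θ)β₀ + θβ₁`. Assume `(E₀)`: `w^{-β₀}` is bounded by `M₀`, and
`(E₁)`: the `ℓ²` endpoint estimate with constant `M₁ > 0`. Then for every finitely
supported `f` and `ξ ∈ ℓ^q(X)`,
`‖λ_X(f)ξ‖_q ≤ M₀^{1-θ} M₁^θ ‖π_#(|f| w^{β_θ})‖_q ‖ξ‖_q`. -/
theorem statement3 {G : Type*} [Group G] [Countable G] (H : Subgroup G)
    (θ q : ℝ) (hθ0 : 0 < θ) (hθ1 : θ < 1) (hq : 1 / q = 1 - θ / 2)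
    (w : G → ℝ) (hw : ∀ g, 0 < w g) (β₀ β₁ : ℝ)
    (M₀ M₁ : ℝ) (hM₀ : ∀ g, w g ^ (-β₀) ≤ M₀) (hM₁ : 0 < M₁)
    (hE1 : ∀ f : G → ℂ, (Function.support f).Finite →
      ∀ ξ : G ⧸ H → ℂ, PaperRD.lqNorm 2 ξ ≠ ⊤ →
        PaperRD.lqNorm 2 (PaperRD.lam H f ξ) ≤
          ENNReal.ofReal M₁ *
            PaperRD.lqNorm 2 (PaperRD.fiberSum H (fun g => ‖f g‖ * w g ^ β₁)) *
            PaperRD.lqNorm 2 ξ) :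
    ∀ f : G → ℂ, (Function.support f).Finite →
      ∀ ξ : G ⧸ H → ℂ, PaperRD.lqNorm q ξ ≠ ⊤ →
        PaperRD.lqNorm q (PaperRD.lam H f ξ) ≤
          ENNReal.ofReal M₀ ^ (1 - θ) * ENNReal.ofReal M₁ ^ θ *
            PaperRD.lqNorm q
              (PaperRD.fiberSum H (fun g => ‖f g‖ * w g ^ ((1 - θ) * β₀ + θ * β₁))) *
            PaperRD.lqNorm q ξ := by
  intro f hf ξ hξ
  classical
  -- numerology
  have hθ2 : (0:ℝ) < 1 - θ / 2 := by linarith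
  have hq0 : 0 < q := by
    have h1 : 0 < 1 / q := by rw [hq]; exact hθ2
    exact one_div_pos.mp h1
  have hqne : q ≠ 0 := ne_of_gt hq0
  have hqq : q * (1 - θ / 2) = 1 := by
    rw [← hq]; field_simp
  have hq2 : q < 2 := by nlinarith
  have hq1 : 1 < q := by nlinarith
  have hq2ne : q / 2 ≠ 0 := by positivity
  have hs0 : 0 < (1 - θ) * q := by nlinarith
  have hs1 : (1 - θ) * q < 1 := by nlinarith
  have h1s0 : 0 < 1 - (1 - θ) * q := by linarith
  have h1s : 1 - (1 - θ) * q = q * θ / 2 := by linear_combination -hqq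
  have hinvq : (0:ℝ) ≤ 1 / q := by positivity
  have hM₀0 : 0 < M₀ := lt_of_lt_of_le (Real.rpow_pos_of_pos (hw 1) (-β₀)) (hM₀ 1)
  have hpow : ∀ (r p : ℝ), 0 ≤ r → p ≠ 0 → r * r ^ (p - 1) = r ^ p := by
    intro r p hr hp
    rcases hr.eq_or_lt with h | h
    · rw [← h, zero_mul, Real.zero_rpow hp]
    · conv_rhs => rw [show p = 1 + (p - 1) by ring]
      rw [Real.rpow_add h, Real.rpow_one]
  -- main definitions
  set u : G → ℝ := fun g => ‖f g‖ * w g ^ ((1 - θ) * β₀ + θ * β₁) with hu_def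
  have hu0 : ∀ g, 0 ≤ u g := fun g => mul_nonneg (norm_nonneg _) (Real.rpow_nonneg (hw g).le _)
  have huz : ∀ g, f g = 0 → u g = 0 := fun g h => by simp [hu_def, h]
  have husum : Summable u := by
    apply summable_of_ne_finset_zero (s := hf.toFinset)
    intro g hg
    exact huz g (by simpa [Set.Finite.mem_toFinset] using hg)
  set ν : G ⧸ H → ℝ := PaperRD.fiberSum H u with hν_def
  have husub : ∀ x : G ⧸ H,
      Summable (fun g : {g : G // (QuotientGroup.mk g : G ⧸ H) = x} => u (g : G)) :=
    fun x => husum.subtype _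
  have hν0 : ∀ x, 0 ≤ ν x := fun x => tsum_nonneg fun g => hu0 _
  have hνge : ∀ g : G, u g ≤ ν (QuotientGroup.mk g) := fun g =>
    Summable.le_tsum (husub _) ⟨g, rfl⟩ fun j _ => hu0 _
  set c₀ : G → ℝ := fun g => u g * w g ^ (-β₀) * ν (QuotientGroup.mk g) ^ (q - 1) with hc₀_def
  set c₁ : G → ℝ := fun g => u g * w g ^ (-β₁) * ν (QuotientGroup.mk g) ^ (q / 2 - 1) with hc₁_def
  have hc₀0 : ∀ g, 0 ≤ c₀ g := fun g =>
    mul_nonneg (mul_nonneg (hu0 g) (Real.rpow_nonneg (hw g).le _)) (Real.rpow_nonneg (hν0 _) _)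
  have hc₁0 : ∀ g, 0 ≤ c₁ g := fun g =>
    mul_nonneg (mul_nonneg (hu0 g) (Real.rpow_nonneg (hw g).le _)) (Real.rpow_nonneg (hν0 _) _)
  have hc₁z : ∀ g, f g = 0 → c₁ g = 0 := fun g h => by
    simp [hc₁_def, huz g h]
  set NX : ℝ≥0∞ := ∑' y : G ⧸ H, ENNReal.ofReal ‖ξ y‖ ^ q with hNX_def
  set NV : ℝ≥0∞ := ∑' x : G ⧸ H, ENNReal.ofReal (ν x) ^ q with hNV_def
  set S₀ : G ⧸ H → ℝ≥0∞ :=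
    fun x => ∑' g : G, ENNReal.ofReal (c₀ g * ‖ξ ((g⁻¹ : G) • x)‖ ^ q) with hS₀_def
  set S₁ : G ⧸ H → ℝ≥0∞ :=
    fun x => ∑' g : G, ENNReal.ofReal (c₁ g * ‖ξ ((g⁻¹ : G) • x)‖ ^ (q / 2)) with hS₁_def
  have hlqξ : PaperRD.lqNorm q ξ = NX ^ (1 / q) := rfl
  have hlqν : PaperRD.lqNorm q ν = NV ^ (1 / q) := by
    unfold PaperRD.lqNorm
    congr 1
    exact tsum_congr fun x => by rw [Real.norm_of_nonneg (hν0 x)]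
  have hNXne : NX ≠ ⊤ := by
    intro h
    apply hξ
    rw [hlqξ, h, ENNReal.top_rpow_of_pos (by positivity)]
  -- Step A : pointwise real inequality
  have hA : ∀ (g : G) (t : ℝ), 0 ≤ t →
      ‖f g‖ * t ≤ (c₀ g * t ^ q) ^ (1 - θ) * (c₁ g * t ^ (q / 2)) ^ θ := by
    intro g t ht
    rcases eq_or_ne (f g) 0 with hfg | hfg
    · rw [hfg, norm_zero, zero_mul]
      exact mul_nonneg
        (Real.rpow_nonneg (mul_nonneg (hc₀0 g) (Real.rpow_nonneg ht q)) _)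
        (Real.rpow_nonneg (mul_nonneg (hc₁0 g) (Real.rpow_nonneg ht _)) _)
    · have hfg' : 0 < ‖f g‖ := norm_pos_iff.mpr hfg
      have hup : 0 < u g := mul_pos hfg' (Real.rpow_pos_of_pos (hw g) _)
      have hνp : 0 < ν (QuotientGroup.mk g) := lt_of_lt_of_le hup (hνge g)
      rcases ht.eq_or_lt with ht0 | htp
      · rw [← ht0, Real.zero_rpow hqne, Real.zero_rpow hq2ne, mul_zero, mul_zero, mul_zero,
          Real.zero_rpow (by linarith : (1:ℝ) - θ ≠ 0), zero_mul]
      · apply le_of_eq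
        have hwp := hw g
        have hc₀p : 0 < c₀ g :=
          mul_pos (mul_pos hup (Real.rpow_pos_of_pos hwp _)) (Real.rpow_pos_of_pos hνp _)
        have hc₁p : 0 < c₁ g :=
          mul_pos (mul_pos hup (Real.rpow_pos_of_pos hwp _)) (Real.rpow_pos_of_pos hνp _)
        have hr0 : 0 < c₀ g * t ^ q := mul_pos hc₀p (Real.rpow_pos_of_pos htp _)
        have hr1 : 0 < c₁ g * t ^ (q / 2) := mul_pos hc₁p (Real.rpow_pos_of_pos htp _)
        have hl : 0 < ‖f g‖ * t := mul_pos hfg' htp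
        have hr : 0 < (c₀ g * t ^ q) ^ (1 - θ) * (c₁ g * t ^ (q / 2)) ^ θ :=
          mul_pos (Real.rpow_pos_of_pos hr0 _) (Real.rpow_pos_of_pos hr1 _)
        apply Real.log_injOn_pos (Set.mem_Ioi.mpr hl) (Set.mem_Ioi.mpr hr)
        have e0 : Real.log (c₀ g) = Real.log ‖f g‖ + ((1 - θ) * β₀ + θ * β₁) * Real.log (w g)
            + (-β₀) * Real.log (w g) + (q - 1) * Real.log (ν (QuotientGroup.mk g)) := by
          simp only [hc₀_def, hu_def]
          rw [Real.log_mul (ne_of_gt (mul_pos hup (Real.rpow_pos_of_pos hwp _)))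
              (ne_of_gt (Real.rpow_pos_of_pos hνp _)),
            Real.log_mul (ne_of_gt hup) (ne_of_gt (Real.rpow_pos_of_pos hwp _)),
            Real.log_rpow hwp, Real.log_rpow hνp,
            Real.log_mul (ne_of_gt hfg') (ne_of_gt (Real.rpow_pos_of_pos hwp _)),
            Real.log_rpow hwp]
        have e1 : Real.log (c₁ g) = Real.log ‖f g‖ + ((1 - θ) * β₀ + θ * β₁) * Real.log (w g)
            + (-β₁) * Real.log (w g) + (q / 2 - 1) * Real.log (ν (QuotientGroup.mk g)) := by
          simp only [hc₁_def, hu_def]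
          rw [Real.log_mul (ne_of_gt (mul_pos hup (Real.rpow_pos_of_pos hwp _)))
              (ne_of_gt (Real.rpow_pos_of_pos hνp _)),
            Real.log_mul (ne_of_gt hup) (ne_of_gt (Real.rpow_pos_of_pos hwp _)),
            Real.log_rpow hwp, Real.log_rpow hνp,
            Real.log_mul (ne_of_gt hfg') (ne_of_gt (Real.rpow_pos_of_pos hwp _)),
            Real.log_rpow hwp]
        rw [Real.log_mul (ne_of_gt hfg') (ne_of_gt htp),
          Real.log_mul (ne_of_gt (Real.rpow_pos_of_pos hr0 _)) (ne_of_gt (Real.rpow_pos_of_pos hr1 _)),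
          Real.log_rpow hr0, Real.log_rpow hr1,
          Real.log_mul (ne_of_gt hc₀p) (ne_of_gt (Real.rpow_pos_of_pos htp _)),
          Real.log_mul (ne_of_gt hc₁p) (ne_of_gt (Real.rpow_pos_of_pos htp _)),
          Real.log_rpow htp, Real.log_rpow htp, e0, e1]
        linear_combination (-(Real.log (ν (QuotientGroup.mk g)) + Real.log t)) * hqq
  -- Step B : triangle inequality
  have hBB : ∀ x : G ⧸ H, ENNReal.ofReal ‖PaperRD.lam H f ξ x‖ ≤
      ∑' g : G, ENNReal.ofReal (‖f g‖ * ‖ξ ((g⁻¹ : G) • x)‖) := by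
    intro x
    have hsn : Summable fun g : G => ‖f g * ξ ((g⁻¹ : G) • x)‖ := by
      apply summable_of_ne_finset_zero (s := hf.toFinset)
      intro g hg
      have : f g = 0 := by simpa [Set.Finite.mem_toFinset] using hg
      simp [this]
    calc ENNReal.ofReal ‖PaperRD.lam H f ξ x‖
        ≤ ENNReal.ofReal (∑' g : G, ‖f g * ξ ((g⁻¹ : G) • x)‖) :=
          ENNReal.ofReal_le_ofReal (norm_tsum_le_tsum_norm hsn)
      _ = ∑' g : G, ENNReal.ofReal ‖f g * ξ ((g⁻¹ : G) • x)‖ :=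
          ENNReal.ofReal_tsum_of_nonneg (fun g => norm_nonneg _) hsn
      _ = ∑' g : G, ENNReal.ofReal (‖f g‖ * ‖ξ ((g⁻¹ : G) • x)‖) :=
          tsum_congr fun g => by rw [norm_mul]
  -- Step C : pointwise bound after Hölder in g
  have hC : ∀ x : G ⧸ H, ENNReal.ofReal ‖PaperRD.lam H f ξ x‖ ≤
      S₀ x ^ (1 - θ) * S₁ x ^ θ := by
    intro x
    refine (hBB x).trans ?_
    have hpt : ∀ g : G, ENNReal.ofReal (‖f g‖ * ‖ξ ((g⁻¹ : G) • x)‖) ≤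
        ENNReal.ofReal (c₀ g * ‖ξ ((g⁻¹ : G) • x)‖ ^ q) ^ (1 - θ) *
        ENNReal.ofReal (c₁ g * ‖ξ ((g⁻¹ : G) • x)‖ ^ (q / 2)) ^ θ := by
      intro g
      rw [ENNReal.ofReal_rpow_of_nonneg
          (mul_nonneg (hc₀0 g) (Real.rpow_nonneg (norm_nonneg _) _)) (by linarith : (0:ℝ) ≤ 1 - θ),
        ENNReal.ofReal_rpow_of_nonneg
          (mul_nonneg (hc₁0 g) (Real.rpow_nonneg (norm_nonneg _) _)) hθ0.le,
        ← ENNReal.ofReal_mul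
          (Real.rpow_nonneg (mul_nonneg (hc₀0 g) (Real.rpow_nonneg (norm_nonneg _) _)) _)]
      exact ENNReal.ofReal_le_ofReal (hA g _ (norm_nonneg _))
    refine (ENNReal.tsum_le_tsum hpt).trans ?_
    have h := tsum_holder_aux (fun g : G => ENNReal.ofReal (c₀ g * ‖ξ ((g⁻¹ : G) • x)‖ ^ q))
      (fun g : G => ENNReal.ofReal (c₁ g * ‖ξ ((g⁻¹ : G) • x)‖ ^ (q / 2)))
      (by linarith : (0:ℝ) < 1 - θ) (by linarith : 1 - θ < 1)
    rw [show (1:ℝ) - (1 - θ) = θ by ring] at h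
    simpa [hS₀_def, hS₁_def] using h
  -- Step D : ℓ¹-type bound for S₀
  have hD : ∑' x : G ⧸ H, S₀ x ≤ ENNReal.ofReal M₀ * NV * NX := by
    have hswap : ∑' x : G ⧸ H, S₀ x =
        ∑' g : G, ∑' x : G ⧸ H, ENNReal.ofReal (c₀ g * ‖ξ ((g⁻¹ : G) • x)‖ ^ q) := by
      simp only [hS₀_def]
      exact ENNReal.tsum_comm
    rw [hswap]
    have hxg : ∀ g : G, (∑' x : G ⧸ H, ENNReal.ofReal (c₀ g * ‖ξ ((g⁻¹ : G) • x)‖ ^ q)) =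
        ENNReal.ofReal (c₀ g) * NX := by
      intro g
      have h1 : ∀ x : G ⧸ H, ENNReal.ofReal (c₀ g * ‖ξ ((g⁻¹ : G) • x)‖ ^ q) =
          ENNReal.ofReal (c₀ g) * ENNReal.ofReal ‖ξ ((g⁻¹ : G) • x)‖ ^ q := fun x => by
        rw [ENNReal.ofReal_mul (hc₀0 g), ENNReal.ofReal_rpow_of_nonneg (norm_nonneg _) hq0.le]
      rw [tsum_congr h1, ENNReal.tsum_mul_left]
      congr 1
      exact Equiv.tsum_eq (MulAction.toPerm (g⁻¹ : G)) (fun y => ENNReal.ofReal ‖ξ y‖ ^ q)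
    rw [tsum_congr hxg, ENNReal.tsum_mul_right]
    have hfib : ∑' g : G, ENNReal.ofReal (u g * ν (QuotientGroup.mk g) ^ (q - 1)) = NV := by
      calc ∑' g : G, ENNReal.ofReal (u g * ν (QuotientGroup.mk g) ^ (q - 1))
          = ∑' p : Σ x : G ⧸ H, {g : G // (QuotientGroup.mk g : G ⧸ H) = x},
              ENNReal.ofReal (u ((p.2 : G)) * ν (QuotientGroup.mk ((p.2 : G))) ^ (q - 1)) :=
            ((Equiv.sigmaFiberEquiv (QuotientGroup.mk : G → G ⧸ H)).tsum_eq
              (fun g => ENNReal.ofReal (u g * ν (QuotientGroup.mk g) ^ (q - 1)))).symm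
        _ = ∑' (x : G ⧸ H) (b : {g : G // (QuotientGroup.mk g : G ⧸ H) = x}),
              ENNReal.ofReal (u ((b : G)) * ν (QuotientGroup.mk ((b : G))) ^ (q - 1)) :=
            ENNReal.tsum_sigma' _
        _ = NV := by
            apply tsum_congr
            intro x
            have h2 : ∀ b : {g : G // (QuotientGroup.mk g : G ⧸ H) = x},
                ENNReal.ofReal (u ((b : G)) * ν (QuotientGroup.mk ((b : G))) ^ (q - 1)) =
                ENNReal.ofReal (u ((b : G))) * ENNReal.ofReal (ν x ^ (q - 1)) := fun b => by
              rw [b.2, ENNReal.ofReal_mul (hu0 _)]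
            rw [tsum_congr h2, ENNReal.tsum_mul_right,
              ← ENNReal.ofReal_tsum_of_nonneg (fun g => hu0 _) (husub x)]
            have h3 : (∑' g : {g : G // (QuotientGroup.mk g : G ⧸ H) = x}, u (g : G)) = ν x := rfl
            rw [h3, ← ENNReal.ofReal_mul (hν0 x), hpow (ν x) q (hν0 x) hqne,
              ENNReal.ofReal_rpow_of_nonneg (hν0 x) hq0.le]
    have hgb : ∀ g : G, ENNReal.ofReal (c₀ g) ≤
        ENNReal.ofReal M₀ * ENNReal.ofReal (u g * ν (QuotientGroup.mk g) ^ (q - 1)) := by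
      intro g
      rw [← ENNReal.ofReal_mul hM₀0.le]
      apply ENNReal.ofReal_le_ofReal
      have h2 : 0 ≤ u g * ν (QuotientGroup.mk g) ^ (q - 1) :=
        mul_nonneg (hu0 g) (Real.rpow_nonneg (hν0 _) _)
      calc c₀ g = w g ^ (-β₀) * (u g * ν (QuotientGroup.mk g) ^ (q - 1)) := by
            simp only [hc₀_def]; ring
        _ ≤ M₀ * (u g * ν (QuotientGroup.mk g) ^ (q - 1)) :=
            mul_le_mul_of_nonneg_right (hM₀ g) h2
    calc (∑' g : G, ENNReal.ofReal (c₀ g)) * NX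
        ≤ (∑' g : G, ENNReal.ofReal M₀ *
            ENNReal.ofReal (u g * ν (QuotientGroup.mk g) ^ (q - 1))) * NX :=
          mul_le_mul_left (ENNReal.tsum_le_tsum hgb) NX
      _ = ENNReal.ofReal M₀ * NV * NX := by rw [ENNReal.tsum_mul_left, hfib]
  -- f₁ and η for the ℓ² endpoint
  set f₁ : G → ℂ := fun g => ((c₁ g : ℝ) : ℂ) with hf₁_def
  set η : G ⧸ H → ℂ := fun y => ((‖ξ y‖ ^ (q / 2) : ℝ) : ℂ) with hη_def
  have hf₁fin : (Function.support f₁).Finite := by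
    apply hf.subset
    intro g hg
    simp only [Function.mem_support] at hg ⊢
    intro h
    exact hg (by simp [hf₁_def, hc₁z g h])
  have hη2 : ∀ y, ENNReal.ofReal ‖η y‖ ^ (2:ℝ) = ENNReal.ofReal ‖ξ y‖ ^ q := by
    intro y
    rw [hη_def]
    simp only [Complex.norm_real, Real.norm_of_nonneg (Real.rpow_nonneg (norm_nonneg _) _)]
    rw [← ENNReal.ofReal_rpow_of_nonneg (norm_nonneg _) (by positivity : (0:ℝ) ≤ q / 2),
      ← ENNReal.rpow_mul]
    congr 1
    ring
  have hlqη : PaperRD.lqNorm 2 η = NX ^ (1 / (2:ℝ)) := by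
    unfold PaperRD.lqNorm
    rw [tsum_congr hη2]
  have hηne : PaperRD.lqNorm 2 η ≠ ⊤ := by
    rw [hlqη]
    exact ENNReal.rpow_ne_top_of_nonneg (by norm_num) hNXne
  -- identify the fiber sum for f₁
  have hfib1 : ∀ x : G ⧸ H,
      PaperRD.fiberSum H (fun g => ‖f₁ g‖ * w g ^ β₁) x = ν x ^ (q / 2) := by
    intro x
    unfold PaperRD.fiberSum
    have hterm : ∀ g : {g : G // (QuotientGroup.mk g : G ⧸ H) = x},
        ‖f₁ (g : G)‖ * w (g : G) ^ β₁ = u (g : G) * ν x ^ (q / 2 - 1) := by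
      intro g
      have hn : ‖f₁ (g : G)‖ = c₁ (g : G) := by
        rw [hf₁_def]
        simp [Real.norm_of_nonneg (hc₁0 _)]
      have hw1 : w (g : G) ^ (-β₁) * w (g : G) ^ β₁ = 1 := by
        rw [← Real.rpow_add (hw _)]; simp
      rw [hn]
      simp only [hc₁_def, g.2]
      linear_combination (u (g : G) * ν x ^ (q / 2 - 1)) * hw1
    rw [tsum_congr hterm, tsum_mul_right]
    have h3 : (∑' g : {g : G // (QuotientGroup.mk g : G ⧸ H) = x}, u (g : G)) = ν x := rfl
    rw [h3]
    exact hpow (ν x) (q / 2) (hν0 x) hq2ne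
  -- identify S₁ with the lam of f₁
  have hS1eq : ∀ x : G ⧸ H, S₁ x = ENNReal.ofReal ‖PaperRD.lam H f₁ η x‖ := by
    intro x
    have hnn : ∀ g : G, 0 ≤ c₁ g * ‖ξ ((g⁻¹ : G) • x)‖ ^ (q / 2) := fun g =>
      mul_nonneg (hc₁0 g) (Real.rpow_nonneg (norm_nonneg _) _)
    have hrsum : Summable (fun g : G => c₁ g * ‖ξ ((g⁻¹ : G) • x)‖ ^ (q / 2)) := by
      apply summable_of_ne_finset_zero (s := hf.toFinset)
      intro g hg
      have : f g = 0 := by simpa [Set.Finite.mem_toFinset] using hg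
      rw [hc₁z g this, zero_mul]
    have hlam : PaperRD.lam H f₁ η x =
        ((∑' g : G, c₁ g * ‖ξ ((g⁻¹ : G) • x)‖ ^ (q / 2) : ℝ) : ℂ) := by
      unfold PaperRD.lam
      rw [Complex.ofReal_tsum]
      apply tsum_congr
      intro g
      rw [hf₁_def, hη_def]
      push_cast
      rfl
    rw [hS₁_def, hlam, Complex.norm_real,
      Real.norm_of_nonneg (tsum_nonneg hnn),
      ENNReal.ofReal_tsum_of_nonneg hnn hrsum]
  -- ℓ² endpoint estimate
  have hE := hE1 f₁ hf₁fin η hηne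
  have hlam1 : PaperRD.lqNorm 2 (PaperRD.lam H f₁ η) =
      (∑' x : G ⧸ H, S₁ x ^ (2:ℝ)) ^ (1 / (2:ℝ)) := by
    unfold PaperRD.lqNorm
    congr 1
    exact tsum_congr fun x => by rw [hS1eq x]
  have hmid : PaperRD.lqNorm 2 (PaperRD.fiberSum H fun g => ‖f₁ g‖ * w g ^ β₁) =
      NV ^ (1 / (2:ℝ)) := by
    unfold PaperRD.lqNorm
    congr 1
    apply tsum_congr
    intro x
    rw [hfib1 x, Real.norm_of_nonneg (Real.rpow_nonneg (hν0 x) _),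
      ← ENNReal.ofReal_rpow_of_nonneg (hν0 x) (by positivity : (0:ℝ) ≤ q / 2),
      ← ENNReal.rpow_mul]
    congr 1
    ring
  rw [hlam1, hmid, hlqη] at hE
  have hE2 : ∑' x : G ⧸ H, S₁ x ^ (2:ℝ) ≤ ENNReal.ofReal M₁ ^ (2:ℝ) * NV * NX := by
    calc ∑' x : G ⧸ H, S₁ x ^ (2:ℝ)
        = ((∑' x : G ⧸ H, S₁ x ^ (2:ℝ)) ^ (1 / (2:ℝ))) ^ (2:ℝ) := by
          rw [← ENNReal.rpow_mul]; norm_num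
      _ ≤ (ENNReal.ofReal M₁ * NV ^ (1 / (2:ℝ)) * NX ^ (1 / (2:ℝ))) ^ (2:ℝ) :=
          ENNReal.rpow_le_rpow hE (by norm_num)
      _ = ENNReal.ofReal M₁ ^ (2:ℝ) * NV * NX := by
          rw [ENNReal.mul_rpow_of_nonneg _ _ (by norm_num : (0:ℝ) ≤ 2),
            ENNReal.mul_rpow_of_nonneg _ _ (by norm_num : (0:ℝ) ≤ 2),
            ← ENNReal.rpow_mul, ← ENNReal.rpow_mul]
          norm_num
  -- Hölder in x
  have hsum9 : ∑' x : G ⧸ H, ENNReal.ofReal ‖PaperRD.lam H f ξ x‖ ^ q ≤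
      (ENNReal.ofReal M₀ * NV * NX) ^ ((1 - θ) * q) *
      (ENNReal.ofReal M₁ ^ (2:ℝ) * NV * NX) ^ (1 - (1 - θ) * q) := by
    have hpt : ∀ x : G ⧸ H, ENNReal.ofReal ‖PaperRD.lam H f ξ x‖ ^ q ≤
        S₀ x ^ ((1 - θ) * q) * (S₁ x ^ (2:ℝ)) ^ (1 - (1 - θ) * q) := by
      intro x
      have h1 := ENNReal.rpow_le_rpow (hC x) hq0.le
      rw [ENNReal.mul_rpow_of_nonneg _ _ hq0.le, ← ENNReal.rpow_mul, ← ENNReal.rpow_mul] at h1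
      have e2 : (S₁ x ^ (2:ℝ)) ^ (1 - (1 - θ) * q) = S₁ x ^ (θ * q) := by
        rw [← ENNReal.rpow_mul]
        congr 1
        linear_combination -2 * hqq
      rw [e2]
      exact h1
    refine (ENNReal.tsum_le_tsum hpt).trans ?_
    refine (tsum_holder_aux S₀ (fun x => S₁ x ^ (2:ℝ)) hs0 hs1).trans ?_
    exact mul_le_mul' (ENNReal.rpow_le_rpow hD hs0.le) (ENNReal.rpow_le_rpow hE2 h1s0.le)
  -- final combination
  rw [hlqν, hlqξ]
  have hfinal : PaperRD.lqNorm q (PaperRD.lam H f ξ) ≤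
      ((ENNReal.ofReal M₀ * NV * NX) ^ ((1 - θ) * q) *
       (ENNReal.ofReal M₁ ^ (2:ℝ) * NV * NX) ^ (1 - (1 - θ) * q)) ^ (1 / q) :=
    ENNReal.rpow_le_rpow hsum9 hinvq
  refine hfinal.trans (le_of_eq ?_)
  have hB2 : (ENNReal.ofReal M₁ ^ (2:ℝ)) ^ (1 - (1 - θ) * q) =
      ENNReal.ofReal M₁ ^ (2 * (1 - (1 - θ) * q)) := (ENNReal.rpow_mul _ 2 _).symm
  rw [ENNReal.mul_rpow_of_nonneg _ _ hs0.le, ENNReal.mul_rpow_of_nonneg _ _ hs0.le,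
    ENNReal.mul_rpow_of_nonneg _ _ h1s0.le, ENNReal.mul_rpow_of_nonneg _ _ h1s0.le, hB2]
  have hNV' : NV ^ ((1 - θ) * q) * NV ^ (1 - (1 - θ) * q) = NV := by
    rw [← ENNReal.rpow_add_of_nonneg _ _ hs0.le h1s0.le,
      show (1 - θ) * q + (1 - (1 - θ) * q) = 1 by ring, ENNReal.rpow_one]
  have hNX' : NX ^ ((1 - θ) * q) * NX ^ (1 - (1 - θ) * q) = NX := by
    rw [← ENNReal.rpow_add_of_nonneg _ _ hs0.le h1s0.le,
      show (1 - θ) * q + (1 - (1 - θ) * q) = 1 by ring, ENNReal.rpow_one]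
  have hexpand : ENNReal.ofReal M₀ ^ ((1 - θ) * q) * NV ^ ((1 - θ) * q) * NX ^ ((1 - θ) * q) *
      (ENNReal.ofReal M₁ ^ (2 * (1 - (1 - θ) * q)) * NV ^ (1 - (1 - θ) * q) *
        NX ^ (1 - (1 - θ) * q)) =
      ENNReal.ofReal M₀ ^ ((1 - θ) * q) * ENNReal.ofReal M₁ ^ (2 * (1 - (1 - θ) * q)) *
        (NV * NX) := by
    calc ENNReal.ofReal M₀ ^ ((1 - θ) * q) * NV ^ ((1 - θ) * q) * NX ^ ((1 - θ) * q) *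
          (ENNReal.ofReal M₁ ^ (2 * (1 - (1 - θ) * q)) * NV ^ (1 - (1 - θ) * q) *
            NX ^ (1 - (1 - θ) * q))
        = ENNReal.ofReal M₀ ^ ((1 - θ) * q) * ENNReal.ofReal M₁ ^ (2 * (1 - (1 - θ) * q)) *
            ((NV ^ ((1 - θ) * q) * NV ^ (1 - (1 - θ) * q)) *
             (NX ^ ((1 - θ) * q) * NX ^ (1 - (1 - θ) * q))) := by ring
      _ = ENNReal.ofReal M₀ ^ ((1 - θ) * q) * ENNReal.ofReal M₁ ^ (2 * (1 - (1 - θ) * q)) *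
            (NV * NX) := by rw [hNV', hNX']
  rw [hexpand]
  rw [ENNReal.mul_rpow_of_nonneg _ _ hinvq, ENNReal.mul_rpow_of_nonneg _ _ hinvq,
    ENNReal.mul_rpow_of_nonneg _ _ hinvq, ← ENNReal.rpow_mul, ← ENNReal.rpow_mul]
  have eA : (1 - θ) * q * (1 / q) = 1 - θ := by field_simp
  have eB : 2 * (1 - (1 - θ) * q) * (1 / q) = θ := by
    rw [h1s]
    field_simp
  rw [eA, eB]
  ring
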